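/- Let H be an abelian group and let A, B, C be subgroups of H. Let G be the subgroup of A × B × C consisting of all triples (a,b,c) with a + b + c = 0, and let N be the subgroup of G generated by the triples in G with a = 0, the triples with b = 0, and the triples with c = 0. Then the homomorphism G → C sending (a,b,c) to c induces a group isomorphism from G/N onto the quotient (C ∩ (A+B)) / ((C ∩ A) + (C ∩ B)). -/

import Mathlib

/-- For subgroups `A`, `B`, `C` of an abelian group `H`, with
`G = {(a,b,c) ∈ A × B × C | a + b + c = 0}` and `N ≤ G` generated by the triples with
`a = 0`, those with `b = 0`, and those with `c = 0`, the map `(a,b,c) ↦ c` induces an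
isomorphism `G/N ≃ (C ∩ (A+B)) / ((C ∩ A) + (C ∩ B))`. -/
theorem stmt_0 (H : Type*) [AddCommGroup H] (A B C : AddSubgroup H)
    (G N : AddSubgroup (H × H × H))
    (hG : ∀ p : H × H × H,
      p ∈ G ↔ p.1 ∈ A ∧ p.2.1 ∈ B ∧ p.2.2 ∈ C ∧ p.1 + p.2.1 + p.2.2 = 0)
    (hN : N = AddSubgroup.closure
      {p : H × H × H | p ∈ G ∧ (p.1 = 0 ∨ p.2.1 = 0 ∨ p.2.2 = 0)}) :
    ∃ e : (↥G ⧸ N.addSubgroupOf G) ≃+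
        (↥(C ⊓ (A ⊔ B)) ⧸ ((C ⊓ A) ⊔ (C ⊓ B)).addSubgroupOf (C ⊓ (A ⊔ B))),
      ∀ (p : H × H × H) (hp : p ∈ G) (hp' : p.2.2 ∈ C ⊓ (A ⊔ B)),
        e (QuotientAddGroup.mk ⟨p, hp⟩) = QuotientAddGroup.mk ⟨p.2.2, hp'⟩ := by
  classical
  set K : AddSubgroup H := C ⊓ (A ⊔ B) with hK
  set J : AddSubgroup H := (C ⊓ A) ⊔ (C ⊓ B) with hJ
  have memK : ∀ p : H × H × H, p ∈ G → p.2.2 ∈ K := by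
    intro p hp
    rw [hG] at hp
    obtain ⟨ha, hb, hc, hsum⟩ := hp
    refine AddSubgroup.mem_inf.mpr ⟨hc, ?_⟩
    have hmem : p.1 + p.2.1 ∈ A ⊔ B :=
      add_mem (AddSubgroup.mem_sup_left ha) (AddSubgroup.mem_sup_right hb)
    have hceq : p.2.2 = -(p.1 + p.2.1) := by
      rw [eq_neg_iff_add_eq_zero, add_comm]; exact hsum
    rw [hceq]
    exact neg_mem hmem
  -- the homomorphism G → K
  let f0 : ↥G →+ ↥K := AddMonoidHom.mk'
    (fun g => ⟨g.1.2.2, memK g.1 g.2⟩) (fun x y => by ext; rfl)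
  let f : ↥G →+ (↥K ⧸ J.addSubgroupOf K) :=
    (QuotientAddGroup.mk' (J.addSubgroupOf K)).comp f0
  have hsurj : Function.Surjective f := by
    intro q
    induction q using QuotientAddGroup.induction_on with
    | H c =>
      obtain ⟨c, hcK⟩ := c
      obtain ⟨hcC, hcAB⟩ := AddSubgroup.mem_inf.mp hcK
      obtain ⟨a, ha, b, hb, hab⟩ := AddSubgroup.mem_sup.mp hcAB
      have hg : ((-a, -b, c) : H × H × H) ∈ G := by
        rw [hG]
        exact ⟨neg_mem ha, neg_mem hb, hcC, by rw [← hab]; show -a + -b + (a + b) = 0; rw [← neg_add, neg_add_cancel]⟩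
      exact ⟨⟨⟨-a, -b, c⟩, hg⟩, rfl⟩
  -- third projection
  let π3 : (H × H × H) →+ H := (AddMonoidHom.snd H H).comp (AddMonoidHom.snd H (H × H))
  have hker : f.ker = N.addSubgroupOf G := by
    ext g
    have hgG := g.2
    rw [hG] at hgG
    obtain ⟨ha, hb, hc, hsum⟩ := hgG
    constructor
    · intro hgf
      have hJmem : g.1.2.2 ∈ J := by
        have h0 : f0 g ∈ J.addSubgroupOf K := (QuotientAddGroup.eq_zero_iff _).mp hgf
        exact (AddSubgroup.mem_addSubgroupOf).mp h0
      obtain ⟨u, hu, v, hv, huv⟩ := AddSubgroup.mem_sup.mp hJmem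
      have h1 : ((-u, 0, u) : H × H × H) ∈ N := by
        rw [hN]
        refine AddSubgroup.subset_closure ⟨?_, Or.inr (Or.inl rfl)⟩
        rw [hG]
        exact ⟨neg_mem (AddSubgroup.mem_inf.mp hu).2, zero_mem _, (AddSubgroup.mem_inf.mp hu).1, by show -u + 0 + u = 0; rw [add_zero, neg_add_cancel]⟩
      have h2 : ((0, -v, v) : H × H × H) ∈ N := by
        rw [hN]
        refine AddSubgroup.subset_closure ⟨?_, Or.inl rfl⟩
        rw [hG]
        exact ⟨zero_mem _, neg_mem (AddSubgroup.mem_inf.mp hv).2, (AddSubgroup.mem_inf.mp hv).1, by show 0 + -v + v = 0; rw [zero_add, neg_add_cancel]⟩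
      have h3 : ((g.1.1 + u, g.1.2.1 + v, 0) : H × H × H) ∈ N := by
        rw [hN]
        refine AddSubgroup.subset_closure ⟨?_, Or.inr (Or.inr rfl)⟩
        rw [hG]
        refine ⟨add_mem ha (AddSubgroup.mem_inf.mp hu).2, add_mem hb (AddSubgroup.mem_inf.mp hv).2, zero_mem _, ?_⟩
        rw [show g.1.1 + u + (g.1.2.1 + v) + 0 = g.1.1 + g.1.2.1 + (u + v) from by abel_nf,
          huv]
        exact hsum
      have hdecomp : g.1 = (-u, 0, u) + (0, -v, v) + (g.1.1 + u, g.1.2.1 + v, 0) := by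
        have h3' : g.1.2.2 = u + v + 0 := by rw [add_zero, huv]
        have h1' : g.1.1 = -u + 0 + (g.1.1 + u) := by abel
        have h2' : g.1.2.1 = 0 + -v + (g.1.2.1 + v) := by abel
        refine Prod.ext h1' (Prod.ext h2' h3')
      show g.1 ∈ N
      rw [hdecomp]
      exact add_mem (add_mem h1 h2) h3
    · intro hgN
      have hgN' : g.1 ∈ N := hgN
      rw [hN] at hgN'
      have hsub : AddSubgroup.closure
          {p : H × H × H | p ∈ G ∧ (p.1 = 0 ∨ p.2.1 = 0 ∨ p.2.2 = 0)}
          ≤ AddSubgroup.comap π3 J := by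
        rw [AddSubgroup.closure_le]
        rintro p ⟨hpG, hp0⟩
        rw [hG] at hpG
        obtain ⟨hpa, hpb, hpc, hpsum⟩ := hpG
        show p.2.2 ∈ J
        rcases hp0 with h | h | h
        · -- a = 0 : c = -b ∈ C ⊓ B
          have hcb : p.2.2 = -p.2.1 := by
            rw [eq_neg_iff_add_eq_zero, add_comm]
            rw [h, zero_add] at hpsum
            exact hpsum
          refine AddSubgroup.mem_sup_right (AddSubgroup.mem_inf.mpr ⟨hpc, ?_⟩)
          rw [hcb]; exact neg_mem hpb
        · -- b = 0 : c = -a ∈ C ⊓ A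
          have hca : p.2.2 = -p.1 := by
            rw [eq_neg_iff_add_eq_zero, add_comm]
            rw [h, add_zero] at hpsum
            exact hpsum
          refine AddSubgroup.mem_sup_left (AddSubgroup.mem_inf.mpr ⟨hpc, ?_⟩)
          rw [hca]; exact neg_mem hpa
        · rw [h]; exact zero_mem _
      have hJ3 : g.1.2.2 ∈ J := hsub hgN'
      show f g = 0
      exact (QuotientAddGroup.eq_zero_iff _).mpr
        ((AddSubgroup.mem_addSubgroupOf).mpr hJ3)
  refine ⟨(QuotientAddGroup.quotientAddEquivOfEq hker.symm).trans
    (QuotientAddGroup.quotientKerEquivOfSurjective f hsurj), ?_⟩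
  intro p hp hp'
  rfl
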